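/- Let Λ(C¹,…,C^R) be the exterior algebra over a field k of characteristic 0 on anticommuting generators C^I, with odd partial derivatives ∂_I = ∂/∂C^I. If P₁,…,P_R ∈ Λ(C) satisfy the symmetry condition ∂_I P_J + ∂_J P_I = 0 for all I, J, then there exists a single P ∈ Λ(C) with P_I = ∂_I P for all I. -/
import Mathlib

/-- The (left, odd) partial derivative `∂_I = ∂/∂C^I` on the exterior algebra
`Λ(C¹,…,C^R)`, written on the monomial basis: a basis element is a finite set `S`
representing the ordered product `C_S`, and
`∂_I C_S = (-1)^{#{l∈S : l<I}} C_{S∖{I}}` if `I ∈ S`, else `0`. -/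
noncomputable def extPDeriv (k : Type*) [Field k] (R : ℕ) (I : Fin R) :
    ((Finset (Fin R)) →₀ k) →ₗ[k] ((Finset (Fin R)) →₀ k) :=
  Finsupp.lsum k fun S =>
    LinearMap.toSpanSingleton k _
      (if I ∈ S then
        ((-1 : k) ^ ((S.filter (fun j => j < I)).card)) • Finsupp.single (S.erase I) (1 : k)
      else 0)

section aux
variable {k : Type*} [Field k] {R : ℕ}

private lemma finsuppSumPoint {α M N : Type*} [DecidableEq α] [AddCommMonoid M] [AddCommMonoid N]
    (f : α →₀ M) (a : α) (g : M → N) (hg : g 0 = 0) :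
    (f.sum fun x v => if x = a then g v else 0) = g (f a) := by
  classical
  rw [Finsupp.sum, Finset.sum_ite_eq' f.support a (fun x => g (f x))]
  by_cases hs : a ∈ f.support
  · rw [if_pos hs]
  · rw [if_neg hs, Finsupp.notMem_support_iff.mp hs, hg]

private lemma pd_apply (I : Fin R) (x : Finset (Fin R) →₀ k) (S : Finset (Fin R)) :
    (extPDeriv k R I x) S =
      if I ∈ S then 0
      else (-1 : k) ^ ((S.filter (fun j => j < I)).card) * x (insert I S) := by
  classical
  rw [extPDeriv, Finsupp.lsum_apply, Finsupp.sum_apply]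
  by_cases hIS : I ∈ S
  · rw [if_pos hIS]
    apply Finset.sum_eq_zero
    intro T _
    simp only [LinearMap.toSpanSingleton_apply]
    by_cases hIT : I ∈ T
    · rw [if_pos hIT, smul_smul, Finsupp.smul_single, Finsupp.single_apply, smul_eq_mul, mul_one]
      rw [if_neg]
      intro hh
      exact (Finset.notMem_erase I T) (hh ▸ hIS)
    · rw [if_neg hIT, smul_zero, Finsupp.coe_zero, Pi.zero_apply]
  · rw [if_neg hIS]
    have key : ∀ T : Finset (Fin R), ∀ c : k,
        (c • (if I ∈ T then
          ((-1 : k) ^ ((T.filter (fun j => j < I)).card)) • Finsupp.single (T.erase I) (1:k)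
        else 0)) S
        = if T = insert I S then (-1:k) ^ ((S.filter (fun j => j < I)).card) * c else 0 := by
      intro T c
      by_cases hT : T = insert I S
      · subst hT
        rw [if_pos (Finset.mem_insert_self I S), if_pos rfl, smul_smul, Finsupp.smul_single,
          Finsupp.single_apply, if_pos (Finset.erase_insert hIS), smul_eq_mul, mul_one,
          Finset.filter_insert, if_neg (lt_irrefl I), mul_comm]
      · rw [if_neg hT]
        by_cases hIT : I ∈ T
        · have hne : ¬ (T.erase I = S) := fun hh => hT (by rw [← hh, Finset.insert_erase hIT])
          rw [if_pos hIT, smul_smul, Finsupp.smul_single, Finsupp.single_apply, if_neg hne]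
        · rw [if_neg hIT, smul_zero, Finsupp.coe_zero, Pi.zero_apply]
    calc (x.sum fun T c => (c • (if I ∈ T then
          ((-1 : k) ^ ((T.filter (fun j => j < I)).card)) • Finsupp.single (T.erase I) (1:k)
        else 0)) S)
        = x.sum fun T c => if T = insert I S then (-1:k) ^ ((S.filter (fun j => j < I)).card) * c else 0 := by
          apply Finsupp.sum_congr; intro T _; exact key T (x T)
      _ = (-1:k) ^ ((S.filter (fun j => j < I)).card) * x (insert I S) :=
          finsuppSumPoint x (insert I S) _ (mul_zero _)

/-- The homotopy primitive: `Q = ∑_J C^J ∧ (N+1)⁻¹ P_J` on the monomial basis. -/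
noncomputable def Qaux (k : Type*) [Field k] (R : ℕ) (P : Fin R → (Finset (Fin R) →₀ k)) :
    Finset (Fin R) →₀ k :=
  ∑ J : Fin R, (P J).sum fun S c =>
    Finsupp.single (insert J S)
      (if J ∈ S then 0
       else (((S.card + 1 : ℕ) : k))⁻¹ * (-1 : k) ^ ((S.filter (fun j => j < J)).card) * c)

private lemma Q_apply (P : Fin R → (Finset (Fin R) →₀ k)) (T : Finset (Fin R)) :
    Qaux k R P T = ∑ J : Fin R, (if J ∈ T then
      ((T.card : ℕ) : k)⁻¹ * (-1 : k) ^ (((T.erase J).filter (fun j => j < J)).card)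
        * (P J) (T.erase J) else 0) := by
  classical
  rw [Qaux, Finset.sum_apply']
  apply Finset.sum_congr rfl
  intro J _
  rw [Finsupp.sum_apply]
  by_cases hJT : J ∈ T
  · rw [if_pos hJT]
    have key : ∀ S : Finset (Fin R), ∀ c : k,
        (Finsupp.single (insert J S)
          (if J ∈ S then 0
           else (((S.card + 1 : ℕ) : k))⁻¹ * (-1 : k) ^ ((S.filter (fun j => j < J)).card) * c)) T
        = if S = T.erase J then
            ((T.card : ℕ) : k)⁻¹ * (-1 : k) ^ (((T.erase J).filter (fun j => j < J)).card) * c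
          else 0 := by
      intro S c
      rw [Finsupp.single_apply]
      by_cases hS : S = T.erase J
      · subst hS
        rw [if_pos (Finset.insert_erase hJT), if_neg (Finset.notMem_erase J T),
          if_pos rfl, Finset.card_erase_add_one hJT]
      · rw [if_neg hS]
        by_cases hins : insert J S = T
        · rw [if_pos hins]
          have hJS : J ∈ S := by
            by_contra hJS
            exact hS (by rw [← hins, Finset.erase_insert hJS])
          rw [if_pos hJS]
        · rw [if_neg hins]
    calc ((P J).sum fun S c => (Finsupp.single (insert J S)
          (if J ∈ S then 0
           else (((S.card + 1 : ℕ) : k))⁻¹ * (-1 : k) ^ ((S.filter (fun j => j < J)).card) * c)) T)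
        = (P J).sum fun S c => if S = T.erase J then
            ((T.card : ℕ) : k)⁻¹ * (-1 : k) ^ (((T.erase J).filter (fun j => j < J)).card) * c
          else 0 := by
          apply Finsupp.sum_congr; intro S _; exact key S ((P J) S)
      _ = _ := finsuppSumPoint (P J) (T.erase J) _ (mul_zero _)
  · rw [if_neg hJT]
    apply Finset.sum_eq_zero
    intro S _
    simp only [Finsupp.single_apply]
    rw [if_neg]
    intro hh
    exact hJT (hh ▸ Finset.mem_insert_self J S)

private lemma cardFilterInsert {a : Fin R} {s : Finset (Fin R)} (h : a ∉ s) (p : Fin R → Prop)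
    [DecidablePred p] :
    ((insert a s).filter p).card = (s.filter p).card + if p a then 1 else 0 := by
  rw [Finset.filter_insert]
  by_cases hp : p a
  · rw [if_pos hp, if_pos hp,
      Finset.card_insert_of_notMem (fun hh => h (Finset.mem_of_mem_filter a hh))]
  · rw [if_neg hp, if_neg hp, add_zero]

private lemma negOneSq (a : ℕ) : (-1 : k) ^ a * (-1 : k) ^ a = 1 := by
  rw [← pow_add]
  exact Even.neg_one_pow ⟨a, rfl⟩

private lemma signIdentity {I J : Fin R} {S : Finset (Fin R)} (hIJ : I ≠ J) (hJS : J ∈ S)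
    (hIS : I ∉ S) :
    (-1 : k) ^ ((S.filter (fun j => j < I)).card)
      * (-1 : k) ^ (((insert I (S.erase J)).filter (fun j => j < J)).card)
      * (-1 : k) ^ (((S.erase J).filter (fun j => j < I)).card)
      * (-1 : k) ^ (((S.erase J).filter (fun j => j < J)).card) = -1 := by
  have hIA : I ∉ S.erase J := fun hh => hIS (Finset.mem_of_mem_erase hh)
  have hJA : J ∉ S.erase J := Finset.notMem_erase J S
  have e2 : S = insert J (S.erase J) := (Finset.insert_erase hJS).symm
  have hc : (S.filter (fun j => j < I)).card
      = ((S.erase J).filter (fun j => j < I)).card + if J < I then 1 else 0 := by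
    conv_lhs => rw [e2]
    exact cardFilterInsert hJA (fun j => j < I)
  rw [cardFilterInsert hIA (fun j => j < J), hc]
  set a := ((S.erase J).filter (fun j => j < I)).card
  set b := ((S.erase J).filter (fun j => j < J)).card
  have ha := negOneSq (k := k) a
  have hb := negOneSq (k := k) b
  rcases hIJ.lt_or_gt with hlt | hlt
  · rw [if_neg (asymm hlt), if_pos hlt, add_zero, pow_add, pow_one]
    linear_combination (-(1:k) * (-1:k)^b * (-1:k)^b) * ha + (-1:k) * hb
  · rw [if_pos hlt, if_neg (asymm hlt), add_zero, pow_add, pow_one]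
    linear_combination (-(1:k) * (-1:k)^b * (-1:k)^b) * ha + (-1:k) * hb

end aux

/-- If `P₁,…,P_R` in the exterior algebra `Λ(C¹,…,C^R)` over a char-0 field satisfy
`∂_I P_J + ∂_J P_I = 0` for all `I, J`, then there is a single `P` with `P_I = ∂_I P`. -/
theorem stmt_19 (k : Type*) [Field k] [CharZero k] (R : ℕ)
    (P : Fin R → ((Finset (Fin R)) →₀ k))
    (h : ∀ I J, extPDeriv k R I (P J) + extPDeriv k R J (P I) = 0) :
    ∃ Q : (Finset (Fin R)) →₀ k, ∀ I, P I = extPDeriv k R I Q := by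
  classical
  refine ⟨Qaux k R P, fun I => ?_⟩
  ext S
  rw [pd_apply]
  by_cases hIS : I ∈ S
  · rw [if_pos hIS]
    have hrel := DFunLike.congr_fun (h I I) (S.erase I)
    rw [Finsupp.add_apply, Finsupp.coe_zero, Pi.zero_apply, pd_apply,
      if_neg (Finset.notMem_erase I S), Finset.insert_erase hIS] at hrel
    have h2 : (2 : k) * ((-1 : k) ^ (((S.erase I).filter (fun j => j < I)).card) * (P I) S) = 0 := by
      linear_combination hrel
    rcases mul_eq_zero.mp h2 with h3 | h3
    · exact absurd h3 two_ne_zero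
    rcases mul_eq_zero.mp h3 with h4 | h4
    · exact absurd h4 (pow_ne_zero _ (neg_ne_zero.mpr one_ne_zero))
    · exact h4
  · rw [if_neg hIS, Q_apply, Finset.sum_ite_mem, Finset.univ_inter]
    have hn : (((insert I S).card : ℕ) : k) ≠ 0 := by
      rw [Nat.cast_ne_zero]
      simp [Finset.card_insert_of_notMem hIS]
    have key : ∀ J ∈ insert I S,
        (((insert I S).card : ℕ) : k)⁻¹
          * (-1 : k) ^ ((((insert I S).erase J).filter (fun j => j < J)).card)
          * (P J) ((insert I S).erase J)
        = (((insert I S).card : ℕ) : k)⁻¹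
          * ((-1 : k) ^ ((S.filter (fun j => j < I)).card) * (P I) S) := by
      intro J hJ
      rcases Finset.mem_insert.mp hJ with rfl | hJS
      · rw [Finset.erase_insert hIS, mul_assoc]
      · have hIJ : I ≠ J := fun hh => hIS (hh ▸ hJS)
        have hIA : I ∉ S.erase J := fun hh => hIS (Finset.mem_of_mem_erase hh)
        have hJA : J ∉ S.erase J := Finset.notMem_erase J S
        have hrel := DFunLike.congr_fun (h I J) (S.erase J)
        rw [Finsupp.add_apply, Finsupp.coe_zero, Pi.zero_apply, pd_apply, pd_apply,
          if_neg hIA, if_neg hJA, Finset.insert_erase hJS] at hrel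
        have hsign := signIdentity (k := k) hIJ hJS hIS
        have hTE : (insert I S).erase J = insert I (S.erase J) :=
          Finset.erase_insert_of_ne hIJ
        rw [hTE]
        set m := (((insert I S).card : ℕ) : k)
        set u := (-1 : k) ^ (((insert I (S.erase J)).filter (fun j => j < J)).card) with hu
        set a := (-1 : k) ^ (((S.erase J).filter (fun j => j < I)).card) with hadef
        set b := (-1 : k) ^ (((S.erase J).filter (fun j => j < J)).card) with hbdef
        set s := (-1 : k) ^ ((S.filter (fun j => j < I)).card) with hsdef
        set x := (P J) (insert I (S.erase J))
        set y := (P I) S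
        have ha : a * a = 1 := negOneSq _
        have hs : s * s = 1 := negOneSq _
        -- hrel : a * x + b * y = 0 ; hsign : s * u * a * b = -1
        linear_combination (m⁻¹ * u * a) * hrel - (m⁻¹ * u * x) * ha
          - (m⁻¹ * s * y) * hsign + (m⁻¹ * u * a * b * y) * hs
    rw [Finset.sum_congr rfl key, Finset.sum_const, nsmul_eq_mul]
    have hinv : (((insert I S).card : ℕ) : k) * (((insert I S).card : ℕ) : k)⁻¹ = 1 :=
      mul_inv_cancel₀ hn
    have hs2 : (-1 : k) ^ ((S.filter (fun j => j < I)).card)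
        * (-1 : k) ^ ((S.filter (fun j => j < I)).card) = 1 := negOneSq _
    set s := (-1 : k) ^ ((S.filter (fun j => j < I)).card)
    set n := (((insert I S).card : ℕ) : k)
    set y := (P I) S
    linear_combination (-y) * hs2 + (-(s * s * y)) * hinv
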